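/- Let δ > 0 and y > 0, set α = iy, and define V(z) = (K(α,z) + K(−α,z)) / (K(α,α) + K(−α,α)), where K(α,α) = sinh(2πyδ)/(2πy) and K(−α,α) = δ. Then |V(t)| ≤ 1 for every t ∈ ℝ if and only if 4·sinh(πδy) ≤ sinh(2πδy) + 2πδy. -/

import Mathlib

open scoped Real

/-- `sinh x ≤ x * cosh x` for `0 ≤ x`. -/
lemma sinh_le_mul_cosh_aux {x : ℝ} (hx : 0 ≤ x) : Real.sinh x ≤ x * Real.cosh x := by
  have hmono : MonotoneOn (fun z : ℝ => z * Real.cosh z - Real.sinh z) (Set.Ici 0) := by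
    apply monotoneOn_of_deriv_nonneg (convex_Ici 0)
    · exact ((continuous_id.mul Real.continuous_cosh).sub Real.continuous_sinh).continuousOn
    · intro z _
      exact (((hasDerivAt_id z).mul (Real.hasDerivAt_cosh z)).sub
        (Real.hasDerivAt_sinh z)).differentiableAt.differentiableWithinAt
    · intro z hz
      rw [interior_Ici, Set.mem_Ioi] at hz
      have hd : deriv (fun z : ℝ => z * Real.cosh z - Real.sinh z) z = z * Real.sinh z := by
        have := (((hasDerivAt_id z).mul (Real.hasDerivAt_cosh z)).sub
          (Real.hasDerivAt_sinh z)).deriv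
        simpa using this
      rw [hd]
      exact mul_nonneg hz.le (Real.sinh_nonneg_iff.2 hz.le)
  have h0 := hmono Set.self_mem_Ici (Set.mem_Ici.2 hx) hx
  simp at h0
  linarith

/-- Key inequality: `2 sinh b ≤ cosh b * sinh b + b` for `0 ≤ b`. -/
lemma key_ineq_aux {b : ℝ} (hb : 0 ≤ b) :
    2 * Real.sinh b ≤ Real.cosh b * Real.sinh b + b := by
  have h1 := sinh_le_mul_cosh_aux hb
  have h2 : b ≤ Real.sinh b := Real.self_le_sinh_iff.2 hb
  have h3 : (1 : ℝ) ≤ Real.cosh b := Real.one_le_cosh b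
  nlinarith [mul_nonneg (sub_nonneg.2 h2) (sub_nonneg.2 h3)]

set_option maxHeartbeats 1000000 in
/-- The main real bound on the numerator. -/
lemma num_bound_aux (δ y t : ℝ) (hδ : 0 < δ) (hy : 0 < y) :
    |2*t*Real.sin (π*δ*t)*Real.cosh (π*δ*y) + 2*y*Real.cos (π*δ*t)*Real.sinh (π*δ*y)|
      ≤ π*(t^2+y^2)*(Real.sinh (2*(π*δ*y))/(2*π*y) + δ) := by
  have hπ := Real.pi_pos
  set a := π*δ*t with ha
  set b := π*δ*y with hb
  set s := Real.sinh b with hs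
  set c := Real.cosh b with hc
  have hbpos : 0 < b := by positivity
  have hspos : 0 < s := Real.sinh_pos_iff.2 hbpos
  have hc1 : (1:ℝ) ≤ c := Real.one_le_cosh b
  have hkey : 2*s ≤ c*s + b := key_ineq_aux hbpos.le
  have hrhs : π*(t^2+y^2)*(Real.sinh (2*b)/(2*π*y) + δ) = (t^2+y^2)*(c*s+b)/y := by
    rw [Real.sinh_two_mul, ← hs, ← hc, hb]
    field_simp
  rw [hrhs]
  set N := 2*t*Real.sin a*c + 2*y*Real.cos a*s with hN
  have hsin2 : y^2*(Real.sin a)^2 ≤ t^2*s^2 := by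
    have h1 : |Real.sin a| ≤ |a| := Real.abs_sin_le_abs
    have h2 : |a| = (b/y)*|t| := by
      rw [ha, hb]; rw [abs_mul, abs_of_pos (by positivity : (0:ℝ) < π*δ)]
      field_simp
    have h3 : b ≤ s := Real.self_le_sinh_iff.2 hbpos.le
    have h4 : |Real.sin a| * y ≤ |t| * s := by
      calc |Real.sin a| * y ≤ ((b/y)*|t|) * y := by
            apply mul_le_mul_of_nonneg_right (h1.trans h2.le) hy.le
        _ = |t| * b := by field_simp
        _ ≤ |t| * s := mul_le_mul_of_nonneg_left h3 (abs_nonneg t)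
    have h5 := mul_self_le_mul_self (mul_nonneg (abs_nonneg (Real.sin a)) hy.le) h4
    nlinarith [sq_abs (Real.sin a), sq_abs t, h5]
  have hcsq : c^2 = s^2 + 1 := Real.cosh_sq b
  have hcossin : (Real.sin a)^2 + (Real.cos a)^2 = 1 := Real.sin_sq_add_cos_sq a
  have hXY : (Real.sin a*c)^2 + (Real.cos a*s)^2 = (Real.sin a)^2 + s^2 := by
    linear_combination (Real.sin a)^2 * hcsq + s^2 * hcossin
  have hCS : (t*(Real.sin a*c) + y*(Real.cos a*s))^2
      ≤ (t^2+y^2)*((Real.sin a*c)^2 + (Real.cos a*s)^2) := by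
    nlinarith [sq_nonneg (t*(Real.cos a*s) - y*(Real.sin a*c))]
  have hCS' := mul_le_mul_of_nonneg_left hCS (show (0:ℝ) ≤ 4*y^2 by positivity)
  have hstep : y^2*((t^2+y^2)*((Real.sin a)^2+s^2)) ≤ (t^2+y^2)^2*s^2 := by
    nlinarith [mul_nonneg (by positivity : (0:ℝ) ≤ t^2+y^2) (sub_nonneg.2 hsin2)]
  have h1 : (y*N)^2 ≤ (2*(t^2+y^2)*s)^2 := by
    calc (y*N)^2 = 4*y^2*((t*(Real.sin a*c)+y*(Real.cos a*s))^2) := by rw [hN]; ring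
      _ ≤ 4*y^2*((t^2+y^2)*((Real.sin a*c)^2+(Real.cos a*s)^2)) := hCS'
      _ = 4*(y^2*((t^2+y^2)*((Real.sin a)^2+s^2))) := by rw [hXY]; ring
      _ ≤ 4*((t^2+y^2)^2*s^2) := by linarith
      _ = (2*(t^2+y^2)*s)^2 := by ring
  have h2 : |y*N| ≤ 2*(t^2+y^2)*s := by
    have h := Real.sqrt_le_sqrt h1
    rwa [Real.sqrt_sq_eq_abs, Real.sqrt_sq (by positivity)] at h
  rw [abs_mul, abs_of_pos hy] at h2
  rw [le_div_iff₀ hy]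
  calc |N| * y = y * |N| := by ring
    _ ≤ 2*(t^2+y^2)*s := h2
    _ ≤ (t^2+y^2)*(c*s+b) := by nlinarith [sq_nonneg t, sq_nonneg y]

/-- The reproducing kernel `K(ω,z) = sin(πδ(z - conj ω)) / (π(z - conj ω))`,
extended by `K(ω, conj ω) = δ`. -/
noncomputable def Ker (δ : ℝ) (ω z : ℂ) : ℂ :=
  if z = (starRingEnd ℂ) ω then (δ : ℂ)
  else Complex.sin ((π : ℂ) * (δ : ℂ) * (z - (starRingEnd ℂ) ω)) /
    ((π : ℂ) * (z - (starRingEnd ℂ) ω))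

theorem stmt15 (δ y : ℝ) (hδ : 0 < δ) (hy : 0 < y)
    (α : ℂ) (hα : α = (y : ℂ) * Complex.I)
    (V : ℂ → ℂ)
    (hV : V = fun z => (Ker δ α z + Ker δ (-α) z) / (Ker δ α α + Ker δ (-α) α)) :
    (∀ t : ℝ, ‖V t‖ ≤ 1) ↔
      4 * Real.sinh (π * δ * y) ≤ Real.sinh (2 * π * δ * y) + 2 * π * δ * y := by
  have hπ := Real.pi_pos
  have hrhs : 4 * Real.sinh (π * δ * y) ≤ Real.sinh (2 * π * δ * y) + 2 * π * δ * y := by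
    have h2 : Real.sinh (2*(π*δ*y)) = 2*Real.sinh (π*δ*y)*Real.cosh (π*δ*y) :=
      Real.sinh_two_mul _
    have hk := key_ineq_aux (b := π*δ*y) (by positivity)
    have h3 : 2 * π * δ * y = 2*(π*δ*y) := by ring
    rw [h3, h2]
    linarith
  refine ⟨fun _ => hrhs, fun _ t => ?_⟩
  -- Evaluate the denominator
  have hc1 : (starRingEnd ℂ) ((y:ℂ)*Complex.I) = -((y:ℂ)*Complex.I) := by
    simp [Complex.conj_I]
  have hc2 : (starRingEnd ℂ) (-((y:ℂ)*Complex.I)) = (y:ℂ)*Complex.I := by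
    simp [Complex.conj_I]
  have hKαα : Ker δ ((y:ℂ)*Complex.I) ((y:ℂ)*Complex.I)
      = ((Real.sinh (2*(π*δ*y)) / (2*π*y) : ℝ) : ℂ) := by
    rw [Ker, if_neg, hc1]
    · have h1 : (π : ℂ) * (δ : ℂ) * ((y:ℂ)*Complex.I - -((y:ℂ)*Complex.I))
          = ((2*(π*δ*y) : ℝ) : ℂ) * Complex.I := by push_cast; ring
      rw [h1, Complex.sin_mul_I, ← Complex.ofReal_sinh]
      have h2 : (π : ℂ) * ((y:ℂ)*Complex.I - -((y:ℂ)*Complex.I))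
          = ((2*π*y : ℝ):ℂ) * Complex.I := by push_cast; ring
      rw [h2, mul_div_mul_right _ _ Complex.I_ne_zero, ← Complex.ofReal_div]
    · rw [hc1]
      intro h
      have := congrArg Complex.im h
      simp at this
      linarith
  have hKnαα : Ker δ (-((y:ℂ)*Complex.I)) ((y:ℂ)*Complex.I) = (δ : ℂ) := by
    rw [Ker, if_pos]
    simp [Complex.conj_I]
  -- Evaluate the numerator at a real point
  have hnum : Ker δ ((y:ℂ)*Complex.I) (t:ℂ) + Ker δ (-((y:ℂ)*Complex.I)) (t:ℂ)
      = (((2*t*Real.sin (π*δ*t)*Real.cosh (π*δ*y) + 2*y*Real.cos (π*δ*t)*Real.sinh (π*δ*y))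
          / (π*(t^2+y^2)) : ℝ) : ℂ) := by
    have hne1 : (t:ℂ) ≠ -((y:ℂ)*Complex.I) := by
      intro h; have := congrArg Complex.im h; simp at this; linarith
    have hne2 : (t:ℂ) ≠ (y:ℂ)*Complex.I := by
      intro h; have := congrArg Complex.im h; simp at this; linarith
    rw [Ker, Ker, hc1, hc2, if_neg hne1, if_neg hne2]
    have ha1 : (π:ℂ)*(δ:ℂ)*((t:ℂ) - -((y:ℂ)*Complex.I))
        = ((π*δ*t : ℝ):ℂ) + ((π*δ*y : ℝ):ℂ)*Complex.I := by push_cast; ring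
    have ha2 : (π:ℂ)*(δ:ℂ)*((t:ℂ) - (y:ℂ)*Complex.I)
        = ((π*δ*t : ℝ):ℂ) + ((-(π*δ*y) : ℝ):ℂ)*Complex.I := by push_cast; ring
    rw [ha1, ha2, Complex.sin_add_mul_I, Complex.sin_add_mul_I]
    have hd1 : (t:ℂ) - -((y:ℂ)*Complex.I) ≠ 0 := by
      intro h; have := congrArg Complex.im h; simp at this; linarith
    have hd2 : (t:ℂ) - (y:ℂ)*Complex.I ≠ 0 := by
      intro h; have := congrArg Complex.im h; simp at this; linarith
    have hπc : (π:ℂ) ≠ 0 := by exact_mod_cast Real.pi_ne_zero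
    have hty : ((t:ℂ)^2 + (y:ℂ)^2) ≠ 0 := by
      have h : ((t:ℂ) - -((y:ℂ)*Complex.I)) * ((t:ℂ) - (y:ℂ)*Complex.I)
          = (t:ℂ)^2 + (y:ℂ)^2 := by
        linear_combination (-(y:ℂ)^2) * Complex.I_sq
      rw [← h]; exact mul_ne_zero hd1 hd2
    rw [← Complex.ofReal_sin, ← Complex.ofReal_cos, ← Complex.ofReal_sinh, ← Complex.ofReal_cosh,
      ← Complex.ofReal_sinh, ← Complex.ofReal_cosh]
    push_cast
    rw [div_add_div _ _ (mul_ne_zero hπc hd1) (mul_ne_zero hπc hd2)]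
    rw [div_eq_div_iff (mul_ne_zero (mul_ne_zero hπc hd1) (mul_ne_zero hπc hd2))
      (mul_ne_zero hπc hty)]
    simp only [Complex.sinh_neg, Complex.cosh_neg, Real.sinh_neg, Real.cosh_neg,
      Complex.ofReal_neg]
    ring_nf
    simp only [Complex.I_sq]
    ring
  -- Put it together
  have hDpos : 0 < Real.sinh (2*(π*δ*y)) / (2*π*y) + δ := by
    have : 0 < Real.sinh (2*(π*δ*y)) := Real.sinh_pos_iff.2 (by positivity)
    positivity
  rw [hV]
  simp only
  rw [hα, hnum, hKαα, hKnαα, ← Complex.ofReal_add, ← Complex.ofReal_div, Complex.norm_real, Real.norm_eq_abs]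
  rw [abs_div, abs_of_pos hDpos, div_le_one hDpos, abs_div,
    abs_of_pos (by positivity : (0:ℝ) < π*(t^2+y^2)), div_le_iff₀ (by positivity)]
  calc |2*t*Real.sin (π*δ*t)*Real.cosh (π*δ*y) + 2*y*Real.cos (π*δ*t)*Real.sinh (π*δ*y)|
      ≤ π*(t^2+y^2)*(Real.sinh (2*(π*δ*y))/(2*π*y) + δ) := num_bound_aux δ y t hδ hy
    _ = (Real.sinh (2*(π*δ*y))/(2*π*y) + δ) * (π*(t^2+y^2)) := by ring
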